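/- arXiv:2503.08630 — 2 statements merged into one kernel-verified Lean document; each statement's English description precedes it below -/
import Mathlib

section
/- Every (k₁+k₂)-graph Ω decomposes as a matched pair: setting Ω₁ = d⁻¹(ℕ^{k₁} × {0}) and Ω₂ = d⁻¹({0} × ℕ^{k₂}), there exist unique actions ▷: Ω₁ * Ω₂ → Ω₂ and ◁: Ω₁ * Ω₂ → Ω₁ such that ω₁ω₂ = (ω₁ ▷ ω₂)(ω₁ ◁ ω₂) for all composable pairs, with d(ω₁ ▷ ω₂) = d(ω₂) and d(ω₁ ◁ ω₂) = d(ω₁). -/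
/-- A small category in the arrows-only picture: a set of morphisms with source and range
maps (valued in identity morphisms) and a partially defined composition, here implemented
as a total function whose value is only constrained on composable pairs.
`comp f g` denotes the composite "first `g`, then `f`" (range on the left). -/
structure ArrowsCat where
  Mor : Type
  s : Mor → Mor
  r : Mor → Mor
  comp : Mor → Mor → Mor
  s_s : ∀ f, s (s f) = s f
  r_s : ∀ f, r (s f) = s f
  s_r : ∀ f, s (r f) = r f
  r_r : ∀ f, r (r f) = r f
  comp_s : ∀ f, comp f (s f) = f
  r_comp_self : ∀ f, comp (r f) f = f
  s_comp : ∀ f g, s f = r g → s (comp f g) = s g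
  r_comp : ∀ f g, s f = r g → r (comp f g) = r f
  assoc : ∀ f g h, s f = r g → s g = r h → comp (comp f g) h = comp f (comp g h)

/-- A `k`-graph: a countable category with a degree functor `d : Λ → ℕᵏ` satisfying the
unique factorization property. -/
structure KGraph (k : ℕ) extends ArrowsCat where
  countable : Countable Mor
  d : Mor → Fin k → ℕ
  d_s : ∀ f, d (s f) = 0
  d_comp : ∀ f g, s f = r g → d (comp f g) = d f + d g
  factor : ∀ (f : Mor) (m n : Fin k → ℕ), d f = m + n →
    ∃! p : Mor × Mor, s p.1 = r p.2 ∧ d p.1 = m ∧ d p.2 = n ∧ comp p.1 p.2 = f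

/-- Every `(k₁+k₂)`-graph `Ω` decomposes as a matched pair: for
`ω₁ ∈ Ω₁ = d⁻¹(ℕ^{k₁} × {0})` and `ω₂ ∈ Ω₂ = d⁻¹({0} × ℕ^{k₂})` with `s ω₁ = r ω₂`,
there is a unique pair `(ω₁ ▷ ω₂, ω₁ ◁ ω₂) ∈ Ω₂ × Ω₁` with
`ω₁ ω₂ = (ω₁ ▷ ω₂)(ω₁ ◁ ω₂)`, `d (ω₁ ▷ ω₂) = d ω₂` and `d (ω₁ ◁ ω₂) = d ω₁`. -/
theorem stmt3 {k₁ k₂ : ℕ} (Om : KGraph (k₁ + k₂)) :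
    ∀ ω₁ ω₂ : Om.Mor,
      (∀ i : Fin (k₁ + k₂), k₁ ≤ (i : ℕ) → Om.d ω₁ i = 0) →
      (∀ i : Fin (k₁ + k₂), (i : ℕ) < k₁ → Om.d ω₂ i = 0) →
      Om.s ω₁ = Om.r ω₂ →
      ∃! p : Om.Mor × Om.Mor,
        (∀ i : Fin (k₁ + k₂), (i : ℕ) < k₁ → Om.d p.1 i = 0) ∧
        (∀ i : Fin (k₁ + k₂), k₁ ≤ (i : ℕ) → Om.d p.2 i = 0) ∧
        Om.s p.1 = Om.r p.2 ∧
        Om.d p.1 = Om.d ω₂ ∧ Om.d p.2 = Om.d ω₁ ∧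
        Om.comp p.1 p.2 = Om.comp ω₁ ω₂ := by
  intro ω₁ ω₂ h₁ h₂ hsr
  have hd : Om.d (Om.comp ω₁ ω₂) = Om.d ω₂ + Om.d ω₁ := by
    rw [Om.d_comp ω₁ ω₂ hsr]; exact add_comm _ _
  obtain ⟨p, ⟨hp1, hp2, hp3, hp4⟩, hu⟩ := Om.factor _ _ _ hd
  refine ⟨p, ⟨?_, ?_, hp1, hp2, hp3, hp4⟩, ?_⟩
  · intro i hi; rw [hp2]; exact h₂ i hi
  · intro i hi; rw [hp3]; exact h₁ i hi
  · intro q ⟨_, _, hq1, hq2, hq3, hq4⟩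
    exact hu q ⟨hq1, hq2, hq3, hq4⟩
end

section
/- Let Ω be a quasi-product (k₁+k₂)-graph with quasi-factors Λ and Γ. Then in its matched-pair decomposition, Ω₁ decomposes as the disjoint union over w ∈ Γ⁰ of k₁-graphs Ω₁^w × {w}, and Ω₂ decomposes as the disjoint union over x ∈ Λ⁰ of k₂-graphs {x} × Ω₂^x; in particular morphisms of Ω₁ with degree in ℕ^{k₁} × {0} have source and range with the same Γ⁰-coordinate. -/
/-- An edge-colored directed graph with `k` colors. -/
structure ColoredGraph (k : ℕ) where
  V : Type
  E : Type
  es : E → V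
  er : E → V
  color : E → Fin k

namespace ColoredGraph

variable {k k₁ k₂ : ℕ}

/-- A (possibly empty) path in a colored graph: a base (source) vertex together with a
composable list of edges, listed from the range end (head of the list is the last edge
traversed). -/
structure Pth (G : ColoredGraph k) where
  base : G.V
  edges : List G.E
  chain : edges.Chain' fun e f => G.es e = G.er f
  base_src : ∀ e ∈ edges.getLast?, G.es e = base

namespace Pth

variable {G : ColoredGraph k}

/-- The source of a path. -/
def s (p : G.Pth) : G.V := p.base

/-- The range of a path. -/
def r (p : G.Pth) : G.V := (p.edges.head?.map G.er).getD p.base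

/-- The color order of a path. -/
def colors (p : G.Pth) : List (Fin k) := p.edges.map G.color

end Pth

/-- `G.IsComp p q pq` means that `pq` is the composite path "first `q`, then `p`"
(written `pq = p q` in range-on-the-left notation). -/
def IsComp (G : ColoredGraph k) (p q pq : G.Pth) : Prop :=
  p.s = q.r ∧ pq.base = q.base ∧ pq.edges = p.edges ++ q.edges

/-- A factorization rule on the path category of a colored graph: a source-, range- and
color-order-compatible equivalence relation which respects composition (KG0) and such that
every equivalence class contains exactly one path of each permuted color order (KG4).
The quotient is then a `k`-graph. -/
structure FactRule (G : ColoredGraph k) where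
  rel : G.Pth → G.Pth → Prop
  iseqv : Equivalence rel
  s_eq : ∀ p q, rel p q → p.s = q.s
  r_eq : ∀ p q, rel p q → p.r = q.r
  kg0 : ∀ p p' q q' pq p'q', rel p p' → rel q q' →
    G.IsComp p q pq → G.IsComp p' q' p'q' → rel pq p'q'
  kg4 : ∀ (p : G.Pth) (l : List (Fin k)), l.Perm p.colors →
    ∃! q : G.Pth, rel p q ∧ q.colors = l

/-- The Cartesian (box) product of colored graphs. -/
def prodG (G₁ : ColoredGraph k₁) (G₂ : ColoredGraph k₂) : ColoredGraph (k₁ + k₂) where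
  V := G₁.V × G₂.V
  E := G₁.E × G₂.V ⊕ G₁.V × G₂.E
  es e := match e with
    | .inl (e, w) => (G₁.es e, w)
    | .inr (v, f) => (v, G₂.es f)
  er e := match e with
    | .inl (e, w) => (G₁.er e, w)
    | .inr (v, f) => (v, G₂.er f)
  color e := match e with
    | .inl (e, _) => Fin.castAdd k₂ (G₁.color e)
    | .inr (_, f) => Fin.natAdd k₁ (G₂.color f)

/-- The lift of a path of `G₁` to the slice `G₁ × {w}` of the product graph. -/
def lift₁ {G₁ : ColoredGraph k₁} {G₂ : ColoredGraph k₂} (w : G₂.V) (p : G₁.Pth) :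
    (prodG G₁ G₂).Pth where
  base := (p.base, w)
  edges := p.edges.map fun e => Sum.inl (e, w)
  chain := by
    refine (List.isChain_map (fun e => (Sum.inl (e, w) : (prodG G₁ G₂).E))).2 ?_
    refine List.IsChain.imp ?_ p.chain
    intro a b h
    show ((G₁.es a, w) : G₁.V × G₂.V) = (G₁.er b, w)
    rw [h]
  base_src := by
    intro e he
    rw [Option.mem_def] at he
    have he' : Option.map (fun e => (Sum.inl (e, w) : (prodG G₁ G₂).E)) p.edges.getLast? = some e := by
      rw [← List.getLast?_map]; exact he
    obtain ⟨a, ha, rfl⟩ := Option.map_eq_some_iff.1 he'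
    show ((G₁.es a, w) : G₁.V × G₂.V) = (p.base, w)
    rw [p.base_src a ha]

/-- The lift of a path of `G₂` to the slice `{x} × G₂` of the product graph. -/
def lift₂ {G₁ : ColoredGraph k₁} {G₂ : ColoredGraph k₂} (x : G₁.V) (q : G₂.Pth) :
    (prodG G₁ G₂).Pth where
  base := (x, q.base)
  edges := q.edges.map fun f => Sum.inr (x, f)
  chain := by
    refine (List.isChain_map (fun f => (Sum.inr (x, f) : (prodG G₁ G₂).E))).2 ?_
    refine List.IsChain.imp ?_ q.chain
    intro a b h
    show ((x, G₂.es a) : G₁.V × G₂.V) = (x, G₂.er b)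
    rw [h]
  base_src := by
    intro e he
    rw [Option.mem_def] at he
    have he' : Option.map (fun f => (Sum.inr (x, f) : (prodG G₁ G₂).E)) q.edges.getLast? = some e := by
      rw [← List.getLast?_map]; exact he
    obtain ⟨a, ha, rfl⟩ := Option.map_eq_some_iff.1 he'
    show ((x, G₂.es a) : G₁.V × G₂.V) = (x, q.base)
    rw [q.base_src a ha]

/-- The underlying undirected graph is connected. -/
def Connected (G : ColoredGraph k) : Prop :=
  ∀ a b : G.V,
    Relation.ReflTransGen
      (fun u v => ∃ e : G.E, (G.es e = u ∧ G.er e = v) ∨ (G.es e = v ∧ G.er e = u)) a b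

/-- Row-finiteness at the level of the one-skeleton: for each vertex and color order there
are only finitely many paths into that vertex with that color order. -/
def RowFinite (G : ColoredGraph k) : Prop :=
  ∀ (v : G.V) (l : List (Fin k)), {p : G.Pth | p.r = v ∧ p.colors = l}.Finite

/-- A vertex-fixing automorphism of a colored graph. -/
def VertexFixingAut (G : ColoredGraph k) (F : G.E → G.E) : Prop :=
  Function.Bijective F ∧
    ∀ e, G.es (F e) = G.es e ∧ G.er (F e) = G.er e ∧ G.color (F e) = G.color e

end ColoredGraph

open ColoredGraph

/-- A quasi-product `(k₁+k₂)`-graph: its one-skeleton is the product of the one-skeletons of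
`Λ = (G₁, rLam)` and `Γ = (G₂, rGam)`, i.e. the quasi-product is given by a factorization
rule `rOmega` on the product graph; the quasi-factors embed as the slices at `base₂`
resp. `base₁` (the injective degree-compatible functors `ψ₁, ψ₂`). -/
structure QuasiProduct (k₁ k₂ : ℕ) where
  G₁ : ColoredGraph k₁
  G₂ : ColoredGraph k₂
  rLam : G₁.FactRule
  rGam : G₂.FactRule
  rOmega : (prodG G₁ G₂).FactRule
  base₁ : G₁.V
  base₂ : G₂.V
  emb₁ : ∀ p q : G₁.Pth, rLam.rel p q ↔ rOmega.rel (lift₁ base₂ p) (lift₁ base₂ q)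
  emb₂ : ∀ p q : G₂.Pth, rGam.rel p q ↔ rOmega.rel (lift₂ base₁ p) (lift₂ base₁ q)

variable {k₁ k₂ : ℕ}

/-- `ActsTo R p q q' p'` expresses, for a factorization rule `R` on the product graph, that
the Zappa–Szép actions of the associated matched pair satisfy `p ▷ q = q'` and
`q ◁ p = p'`; that is, `([p], r q)(s p, [q]) = (r p, [q'])([p'], s q)`, with `q'` and `p'`
of the same color order as `q` and `p`. -/
def ActsTo {G₁ : ColoredGraph k₁} {G₂ : ColoredGraph k₂}
    (R : (prodG G₁ G₂).FactRule) (p : G₁.Pth) (q : G₂.Pth)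
    (q' : G₂.Pth) (p' : G₁.Pth) : Prop :=
  ∃ lhs rhs : (prodG G₁ G₂).Pth,
    (prodG G₁ G₂).IsComp (lift₁ q.r p) (lift₂ p.s q) lhs ∧
    (prodG G₁ G₂).IsComp (lift₂ p.r q') (lift₁ q.s p') rhs ∧
    R.rel lhs rhs ∧ q'.colors = q.colors ∧ p'.colors = p.colors

/-- The quasi-factor `Γ` of a quasi-product is *stable* if the left action is trivial:
`p ▷ q = q` for all paths. -/
def QuasiProduct.Stable (Q : QuasiProduct k₁ k₂) : Prop :=
  ∀ (p : Q.G₁.Pth) (q q' : Q.G₂.Pth) (p' : Q.G₁.Pth),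
    ActsTo Q.rOmega p q q' p' → q' = q

/-- The factorization rule of the slice `Ω₁^w`, i.e. the rule induced on `G₁`-paths by the
slice `G₁ × {w}` of the quasi-product. -/
def QuasiProduct.relAt₁ (Q : QuasiProduct k₁ k₂) (w : Q.G₂.V) (p p' : Q.G₁.Pth) : Prop :=
  Q.rOmega.rel (lift₁ w p) (lift₁ w p')

/-- The factorization rule of the slice `Ω₂^x`. -/
def QuasiProduct.relAt₂ (Q : QuasiProduct k₁ k₂) (x : Q.G₁.V) (q q' : Q.G₂.Pth) : Prop :=
  Q.rOmega.rel (lift₂ x q) (lift₂ x q')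

/-- `F` implements a (vertex- and color-preserving) isomorphism from the quotient
`k`-graph `G*/R` to `G*/S`. -/
def RelIsoVia (G : ColoredGraph k) (R S : G.Pth → G.Pth → Prop) (F : G.Pth → G.Pth) :
    Prop :=
  (∀ p, (F p).s = p.s ∧ (F p).r = p.r ∧ (F p).colors = p.colors) ∧
  (∀ p p', R p p' ↔ S (F p) (F p')) ∧
  (∀ p', ∃ p, S (F p) p') ∧
  (∀ p1 p2 p c, G.IsComp p1 p2 p → G.IsComp (F p1) (F p2) c → S (F p) c)

/-- An isomorphism of the `k`-graphs determined by two factorization rules on the same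
colored graph, given by a vertex bijection `θV` and a map on paths `θP`. -/
def IsoOfRules {k : ℕ} (G : ColoredGraph k) (R S : G.FactRule)
    (θV : G.V → G.V) (θP : G.Pth → G.Pth) : Prop :=
  Function.Bijective θV ∧
  (∀ p, (θP p).s = θV p.s ∧ (θP p).r = θV p.r ∧ (θP p).colors = p.colors) ∧
  (∀ p p', R.rel p p' ↔ S.rel (θP p) (θP p')) ∧
  (∀ q, ∃ p, S.rel (θP p) q) ∧
  (∀ p1 p2 p c, G.IsComp p1 p2 p → G.IsComp (θP p1) (θP p2) c → S.rel (θP p) c)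

/-- `S` is the product factorization rule of `Λ = (G₁, rLam)` and `Γ = (G₂, rGam)`: its
slices are given by the factor rules and both Zappa–Szép actions are trivial. -/
def IsProductRule (G₁ : ColoredGraph k₁) (G₂ : ColoredGraph k₂)
    (rLam : G₁.FactRule) (rGam : G₂.FactRule) (S : (prodG G₁ G₂).FactRule) : Prop :=
  (∀ (w : G₂.V) (p p' : G₁.Pth), rLam.rel p p' ↔ S.rel (lift₁ w p) (lift₁ w p')) ∧
  (∀ (x : G₁.V) (q q' : G₂.Pth), rGam.rel q q' ↔ S.rel (lift₂ x q) (lift₂ x q')) ∧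
  (∀ (p : G₁.Pth) (q q' : G₂.Pth) (p' : G₁.Pth),
    ActsTo S p q q' p' → q' = q ∧ p' = p)

section Aux

open ColoredGraph

variable {k₁ k₂ : ℕ} {G₁ : ColoredGraph k₁} {G₂ : ColoredGraph k₂}

theorem ColoredGraph.Pth.ext' {k : ℕ} {G : ColoredGraph k} {p q : G.Pth}
    (hb : p.base = q.base) (he : p.edges = q.edges) : p = q := by
  cases p; cases q; cases hb; cases he; rfl

theorem lift₁_base (w : G₂.V) (p : G₁.Pth) : (lift₁ (G₂ := G₂) w p).base = (p.base, w) := rfl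

theorem lift₁_s (w : G₂.V) (p : G₁.Pth) : (lift₁ (G₂ := G₂) w p).s = (p.s, w) := rfl

theorem lift₁_r (w : G₂.V) (p : G₁.Pth) : (lift₁ (G₂ := G₂) w p).r = (p.r, w) := by
  cases h : p.edges with
  | nil => simp [Pth.r, lift₁, h]; rfl
  | cons e t => simp [Pth.r, lift₁, h, prodG]

theorem lift₁_colors (w : G₂.V) (p : G₁.Pth) :
    (lift₁ (G₂ := G₂) w p).colors = p.colors.map (Fin.castAdd k₂) := by
  simp [Pth.colors, lift₁, prodG, Function.comp]

theorem lift₁_inj (w : G₂.V) {p q : G₁.Pth}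
    (h : lift₁ (G₂ := G₂) w p = lift₁ w q) : p = q := by
  refine Pth.ext' ?_ ?_
  · exact (Prod.ext_iff.mp (congrArg Pth.base h)).1
  · have := congrArg Pth.edges h
    simp only [lift₁] at this
    refine List.map_injective_iff.mpr ?_ this
    intro a b hab
    injection hab with h'
    exact (Prod.ext_iff.mp h').1

theorem lift₂_base (x : G₁.V) (q : G₂.Pth) : (lift₂ (G₁ := G₁) x q).base = (x, q.base) := rfl

theorem lift₂_s (x : G₁.V) (q : G₂.Pth) : (lift₂ (G₁ := G₁) x q).s = (x, q.s) := rfl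

theorem lift₂_r (x : G₁.V) (q : G₂.Pth) : (lift₂ (G₁ := G₁) x q).r = (x, q.r) := by
  cases h : q.edges with
  | nil => simp [Pth.r, lift₂, h]; rfl
  | cons e t => simp [Pth.r, lift₂, h, prodG]

theorem lift₂_colors (x : G₁.V) (q : G₂.Pth) :
    (lift₂ (G₁ := G₁) x q).colors = q.colors.map (Fin.natAdd k₁) := by
  simp [Pth.colors, lift₂, prodG, Function.comp]

theorem lift₂_inj (x : G₁.V) {p q : G₂.Pth}
    (h : lift₂ (G₁ := G₁) x p = lift₂ x q) : p = q := by
  refine Pth.ext' ?_ ?_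
  · exact (Prod.ext_iff.mp (congrArg Pth.base h)).2
  · have := congrArg Pth.edges h
    simp only [lift₂] at this
    refine List.map_injective_iff.mpr ?_ this
    intro a b hab
    injection hab with h'
    exact (Prod.ext_iff.mp h').2

theorem list_aux₁ (b : G₂.V) :
    ∀ L : List (prodG G₁ G₂).E,
      L.Chain' (fun e f => (prodG G₁ G₂).es e = (prodG G₁ G₂).er f) →
      (∀ e ∈ L.getLast?, ((prodG G₁ G₂).es e).2 = b) →
      (∀ e ∈ L, ∃ e' w, e = Sum.inl (e', w)) →
      ∃ l : List G₁.E, L = l.map fun e => Sum.inl (e, b)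
  | [] => fun _ _ _ => ⟨[], rfl⟩
  | e :: t => by
    intro hc hlast hin
    obtain ⟨e', w, rfl⟩ := hin _ List.mem_cons_self
    cases t with
    | nil =>
      have hw : w = b := by
        have := hlast (Sum.inl (e', w)) rfl
        simpa [prodG] using this
      subst hw
      exact ⟨[e'], rfl⟩
    | cons f t' =>
      obtain ⟨hc1, hc2⟩ := List.isChain_cons_cons.mp hc
      obtain ⟨l, hl⟩ := list_aux₁ b (f :: t') hc2
        (by intro x hx; exact hlast x (by exact hx))
        (fun x hx => hin x (List.mem_cons_of_mem _ hx))
      cases l with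
      | nil => simp at hl
      | cons f₁ l' =>
        have hf : f = Sum.inl (f₁, b) := by
          have := congrArg List.head? hl
          exact Option.some.inj this
        subst hf
        have hw : w = b := by
          have : ((prodG G₁ G₂).es (Sum.inl (e', w))).2
              = ((prodG G₁ G₂).er (Sum.inl (f₁, b))).2 := by rw [hc1]
          simpa [prodG] using this
        subst hw
        exact ⟨e' :: f₁ :: l', congrArg (List.cons _) hl⟩

theorem list_aux₂ (b : G₁.V) :
    ∀ L : List (prodG G₁ G₂).E,
      L.Chain' (fun e f => (prodG G₁ G₂).es e = (prodG G₁ G₂).er f) →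
      (∀ e ∈ L.getLast?, ((prodG G₁ G₂).es e).1 = b) →
      (∀ e ∈ L, ∃ x f', e = Sum.inr (x, f')) →
      ∃ l : List G₂.E, L = l.map fun f => Sum.inr (b, f)
  | [] => fun _ _ _ => ⟨[], rfl⟩
  | e :: t => by
    intro hc hlast hin
    obtain ⟨x, f', rfl⟩ := hin _ List.mem_cons_self
    cases t with
    | nil =>
      have hx : x = b := by
        have := hlast (Sum.inr (x, f')) rfl
        simpa [prodG] using this
      subst hx
      exact ⟨[f'], rfl⟩
    | cons f t' =>
      obtain ⟨hc1, hc2⟩ := List.isChain_cons_cons.mp hc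
      obtain ⟨l, hl⟩ := list_aux₂ b (f :: t') hc2
        (by intro y hy; exact hlast y (by exact hy))
        (fun y hy => hin y (List.mem_cons_of_mem _ hy))
      cases l with
      | nil => simp at hl
      | cons f₁ l' =>
        have hf : f = Sum.inr (b, f₁) := by
          have := congrArg List.head? hl
          exact Option.some.inj this
        subst hf
        have hx : x = b := by
          have : ((prodG G₁ G₂).es (Sum.inr (x, f'))).1
              = ((prodG G₁ G₂).er (Sum.inr (b, f₁))).1 := by rw [hc1]
          simpa [prodG] using this
        subst hx
        exact ⟨f' :: f₁ :: l', congrArg (List.cons _) hl⟩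

theorem slice₁ (P : (prodG G₁ G₂).Pth) (h : ∀ c ∈ P.colors, (c : ℕ) < k₁) :
    ∃ p : G₁.Pth, P = lift₁ P.base.2 p := by
  have hin : ∀ e ∈ P.edges, ∃ e' w, e = Sum.inl (e', w) := by
    intro e he
    cases e with
    | inl y => exact ⟨y.1, y.2, rfl⟩
    | inr y =>
      exfalso
      have := h ((prodG G₁ G₂).color (Sum.inr y)) (List.mem_map_of_mem he)
      simp [prodG] at this
  have hlast : ∀ e ∈ P.edges.getLast?, ((prodG G₁ G₂).es e).2 = P.base.2 := by
    intro e he; rw [P.base_src e he]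
  obtain ⟨l, hl⟩ := list_aux₁ P.base.2 P.edges P.chain hlast hin
  have hchain : l.Chain' fun a c => G₁.es a = G₁.er c := by
    have := P.chain
    rw [hl] at this
    have := (List.isChain_map _).1 this
    refine this.imp ?_
    intro a c hac
    have : ((G₁.es a, P.base.2) : G₁.V × G₂.V) = (G₁.er c, P.base.2) := hac
    exact (Prod.ext_iff.mp this).1
  have hsrc : ∀ e ∈ l.getLast?, G₁.es e = P.base.1 := by
    intro e he
    have : (Sum.inl (e, P.base.2) : (prodG G₁ G₂).E) ∈ P.edges.getLast? := by
      rw [hl]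
      show _ ∈ (l.map fun e => (Sum.inl (e, P.base.2) : (prodG G₁ G₂).E)).getLast?
      rw [List.getLast?_map]
      exact Option.mem_map_of_mem _ he
    have h2 := P.base_src _ this
    have : ((G₁.es e, P.base.2) : G₁.V × G₂.V) = P.base := h2
    exact (Prod.ext_iff.mp this).1
  refine ⟨⟨P.base.1, l, hchain, hsrc⟩, Pth.ext' ?_ ?_⟩
  · exact (Prod.mk.eta).symm
  · exact hl

theorem slice₂ (P : (prodG G₁ G₂).Pth) (h : ∀ c ∈ P.colors, k₁ ≤ (c : ℕ)) :
    ∃ q : G₂.Pth, P = lift₂ P.base.1 q := by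
  have hin : ∀ e ∈ P.edges, ∃ x f', e = Sum.inr (x, f') := by
    intro e he
    cases e with
    | inr y => exact ⟨y.1, y.2, rfl⟩
    | inl y =>
      exfalso
      have := h ((prodG G₁ G₂).color (Sum.inl y)) (List.mem_map_of_mem he)
      simp [prodG] at this
      omega
  have hlast : ∀ e ∈ P.edges.getLast?, ((prodG G₁ G₂).es e).1 = P.base.1 := by
    intro e he; rw [P.base_src e he]
  obtain ⟨l, hl⟩ := list_aux₂ P.base.1 P.edges P.chain hlast hin
  have hchain : l.Chain' fun a c => G₂.es a = G₂.er c := by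
    have := P.chain
    rw [hl] at this
    have := (List.isChain_map _).1 this
    refine this.imp ?_
    intro a c hac
    have : ((P.base.1, G₂.es a) : G₁.V × G₂.V) = (P.base.1, G₂.er c) := hac
    exact (Prod.ext_iff.mp this).2
  have hsrc : ∀ e ∈ l.getLast?, G₂.es e = P.base.2 := by
    intro e he
    have : (Sum.inr (P.base.1, e) : (prodG G₁ G₂).E) ∈ P.edges.getLast? := by
      rw [hl]
      show _ ∈ (l.map fun f => (Sum.inr (P.base.1, f) : (prodG G₁ G₂).E)).getLast?
      rw [List.getLast?_map]
      exact Option.mem_map_of_mem _ he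
    have h2 := P.base_src _ this
    have : ((P.base.1, G₂.es e) : G₁.V × G₂.V) = P.base := h2
    exact (Prod.ext_iff.mp this).2
  refine ⟨⟨P.base.2, l, hchain, hsrc⟩, Pth.ext' ?_ ?_⟩
  · exact (Prod.mk.eta).symm
  · exact hl

theorem isComp_lift₁ (w : G₂.V) {p q pq : G₁.Pth} (h : G₁.IsComp p q pq) :
    (prodG G₁ G₂).IsComp (lift₁ w p) (lift₁ w q) (lift₁ w pq) := by
  obtain ⟨h1, h2, h3⟩ := h
  refine ⟨?_, ?_, ?_⟩
  · rw [lift₁_s, lift₁_r, h1]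
  · rw [lift₁_base, lift₁_base, h2]
  · show pq.edges.map _ = p.edges.map _ ++ q.edges.map _
    rw [h3]; exact List.map_append ..

theorem isComp_lift₂ (x : G₁.V) {p q pq : G₂.Pth} (h : G₂.IsComp p q pq) :
    (prodG G₁ G₂).IsComp (lift₂ x p) (lift₂ x q) (lift₂ x pq) := by
  obtain ⟨h1, h2, h3⟩ := h
  refine ⟨?_, ?_, ?_⟩
  · rw [lift₂_s, lift₂_r, h1]
  · rw [lift₂_base, lift₂_base, h2]
  · show pq.edges.map _ = p.edges.map _ ++ q.edges.map _
    rw [h3]; exact List.map_append ..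

end Aux

open ColoredGraph in
/-- In a quasi-product `(k₁+k₂)`-graph `Ω` with quasi-factors `Λ, Γ`, the
matched-pair factors decompose as disjoint unions: every path whose colors all lie in the
first block (a morphism of `Ω₁`) lives in a slice `G(Λ) × {w}` (in particular its source
and range have the same `Γ⁰`-coordinate), and dually for `Ω₂`; and each slice
`Ω₁^w`, `Ω₂^x` is a `k₁`- resp. `k₂`-graph (its induced relation is a factorization
rule). -/
theorem stmt5 {k₁ k₂ : ℕ} (Q : QuasiProduct k₁ k₂) :
    (∀ P : (prodG Q.G₁ Q.G₂).Pth, (∀ c ∈ P.colors, (c : ℕ) < k₁) →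
      P.s.2 = P.r.2 ∧ ∃ (w : Q.G₂.V) (p : Q.G₁.Pth), P = lift₁ w p) ∧
    (∀ P : (prodG Q.G₁ Q.G₂).Pth, (∀ c ∈ P.colors, k₁ ≤ (c : ℕ)) →
      P.s.1 = P.r.1 ∧ ∃ (x : Q.G₁.V) (q : Q.G₂.Pth), P = lift₂ x q) ∧
    (∀ w : Q.G₂.V, ∃ R : Q.G₁.FactRule, ∀ p p', R.rel p p' ↔ Q.relAt₁ w p p') ∧
    (∀ x : Q.G₁.V, ∃ R : Q.G₂.FactRule, ∀ q q', R.rel q q' ↔ Q.relAt₂ x q q') := by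
  refine ⟨?_, ?_, ?_, ?_⟩
  · intro P h
    obtain ⟨p, hp⟩ := slice₁ P h
    refine ⟨?_, P.base.2, p, hp⟩
    rw [hp, lift₁_s, lift₁_r]
  · intro P h
    obtain ⟨q, hq⟩ := slice₂ P h
    refine ⟨?_, P.base.1, q, hq⟩
    rw [hq, lift₂_s, lift₂_r]
  · intro w
    refine ⟨⟨fun p p' => Q.relAt₁ w p p', ?_, ?_, ?_, ?_, ?_⟩, fun _ _ => Iff.rfl⟩
    · exact ⟨fun p => Q.rOmega.iseqv.refl _, fun h => Q.rOmega.iseqv.symm h,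
        fun h h' => Q.rOmega.iseqv.trans h h'⟩
    · intro p q h
      have := Q.rOmega.s_eq _ _ h
      rw [lift₁_s, lift₁_s] at this
      exact (Prod.ext_iff.mp this).1
    · intro p q h
      have := Q.rOmega.r_eq _ _ h
      rw [lift₁_r, lift₁_r] at this
      exact (Prod.ext_iff.mp this).1
    · intro p p' q q' pq p'q' hp hq hc hc'
      exact Q.rOmega.kg0 _ _ _ _ _ _ hp hq (isComp_lift₁ w hc) (isComp_lift₁ w hc')
    · intro p l hl
      obtain ⟨Qp, ⟨hrel, hcol⟩, huniq⟩ := Q.rOmega.kg4 (lift₁ w p) (l.map (Fin.castAdd k₂))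
        (by rw [lift₁_colors]; exact hl.map _)
      have hlt : ∀ c ∈ Qp.colors, (c : ℕ) < k₁ := by
        intro c hc
        rw [hcol] at hc
        obtain ⟨a, -, rfl⟩ := List.mem_map.mp hc
        simpa using a.isLt
      obtain ⟨q, hq⟩ := slice₁ Qp hlt
      have hsq := Q.rOmega.s_eq _ _ hrel
      have hw : w = Qp.base.2 := congrArg Prod.snd hsq
      have hq' : Qp = lift₁ w q := by rw [hw]; exact hq
      have hcq : q.colors = l := by
        have h2 : q.colors.map (Fin.castAdd k₂) = l.map (Fin.castAdd k₂) := by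
          rw [← lift₁_colors, ← hq', hcol]
        exact List.map_injective_iff.mpr
          (fun a b hab => Fin.ext (by simpa using congrArg Fin.val hab)) h2
      refine ⟨q, ⟨?_, hcq⟩, ?_⟩
      · show Q.rOmega.rel _ _
        rw [← hq']
        exact hrel
      · intro q₁ ⟨hrel₁, hcol₁⟩
        have h3 : lift₁ w q₁ = Qp :=
          huniq _ ⟨hrel₁, by rw [lift₁_colors, hcol₁]⟩
        exact lift₁_inj w (h3.trans hq')
  · intro x
    refine ⟨⟨fun q q' => Q.relAt₂ x q q', ?_, ?_, ?_, ?_, ?_⟩, fun _ _ => Iff.rfl⟩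
    · exact ⟨fun p => Q.rOmega.iseqv.refl _, fun h => Q.rOmega.iseqv.symm h,
        fun h h' => Q.rOmega.iseqv.trans h h'⟩
    · intro p q h
      have := Q.rOmega.s_eq _ _ h
      rw [lift₂_s, lift₂_s] at this
      exact (Prod.ext_iff.mp this).2
    · intro p q h
      have := Q.rOmega.r_eq _ _ h
      rw [lift₂_r, lift₂_r] at this
      exact (Prod.ext_iff.mp this).2
    · intro p p' q q' pq p'q' hp hq hc hc'
      exact Q.rOmega.kg0 _ _ _ _ _ _ hp hq (isComp_lift₂ x hc) (isComp_lift₂ x hc')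
    · intro q l hl
      obtain ⟨Qp, ⟨hrel, hcol⟩, huniq⟩ := Q.rOmega.kg4 (lift₂ x q) (l.map (Fin.natAdd k₁))
        (by rw [lift₂_colors]; exact hl.map _)
      have hle : ∀ c ∈ Qp.colors, k₁ ≤ (c : ℕ) := by
        intro c hc
        rw [hcol] at hc
        obtain ⟨a, -, rfl⟩ := List.mem_map.mp hc
        simp
      obtain ⟨q', hq⟩ := slice₂ Qp hle
      have hsq := Q.rOmega.s_eq _ _ hrel
      have hx : x = Qp.base.1 := congrArg Prod.fst hsq
      have hq' : Qp = lift₂ x q' := by rw [hx]; exact hq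
      have hcq : q'.colors = l := by
        have h2 : q'.colors.map (Fin.natAdd k₁) = l.map (Fin.natAdd k₁) := by
          rw [← lift₂_colors, ← hq', hcol]
        exact List.map_injective_iff.mpr
          (fun a b hab => Fin.ext (by
            have := congrArg Fin.val hab
            simpa using this)) h2
      refine ⟨q', ⟨?_, hcq⟩, ?_⟩
      · show Q.rOmega.rel _ _
        rw [← hq']
        exact hrel
      · intro q₁ ⟨hrel₁, hcol₁⟩
        have h3 : lift₂ x q₁ = Qp :=
          huniq _ ⟨hrel₁, by rw [lift₂_colors, hcol₁]⟩
        exact lift₂_inj x (h3.trans hq')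
end
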